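/- Let D be an extremally co-well-powered complete category. Then for every reduced projectively filtered object (X, Q) of D, the limit lim Q of the functor (Q, D) → D exists; moreover the subclass of Q consisting of extremal epimorphisms forms a full subcategory of (Q, D) that is initial, and it may be taken to be small. -/

import Mathlib

open CategoryTheory CategoryTheory.Limits

universe w v u v₂ u₂

namespace FilteredCats

variable {D : Type u} [Category.{v} D]

/-- The class of morphisms of `D` with source `X`. -/
def MorFrom (X : D) : Type (max u v) := Σ Y : D, X ⟶ Y

/-- `Dom δ₁ δ₂` means `δ₁ ≥ δ₂`: there is `h` with `h ∘ δ₁ = δ₂`. -/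
def Dom {X : D} (δ₁ δ₂ : MorFrom X) : Prop :=
  ∃ h : δ₁.1 ⟶ δ₂.1, δ₁.2 ≫ h = δ₂.2

/-- A projective filtration on `X`: a nonempty, directed, saturated class of
morphisms with source `X`. -/
structure ProjFilt (X : D) where
  carrier : Set (MorFrom X)
  nonempty' : carrier.Nonempty
  directed' : ∀ δ₁ ∈ carrier, ∀ δ₂ ∈ carrier, ∃ δ ∈ carrier, Dom δ δ₁ ∧ Dom δ δ₂
  saturated' : ∀ δ₁ ∈ carrier, ∀ δ₂, Dom δ₁ δ₂ → δ₂ ∈ carrier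

/-- The pull back of a set of morphisms with source `X` along `f : X' ⟶ X`. -/
def pullSet {X' X : D} (f : X' ⟶ X) (S : Set (MorFrom X)) : Set (MorFrom X') :=
  {δ' | ∃ δ ∈ S, δ' = ⟨δ.1, f ≫ δ.2⟩}

/-- The pull back of a projective filtration along `f : X' ⟶ X`. -/
def ProjFilt.pull {X' X : D} (f : X' ⟶ X) (P : ProjFilt X) : ProjFilt X' where
  carrier := pullSet f P.carrier
  nonempty' := by
    obtain ⟨δ, hδ⟩ := P.nonempty'
    exact ⟨⟨δ.1, f ≫ δ.2⟩, δ, hδ, rfl⟩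
  directed' := by
    rintro _ ⟨δ₁, h₁, rfl⟩ _ ⟨δ₂, h₂, rfl⟩
    obtain ⟨δ, hδ, ⟨g₁, hg₁⟩, ⟨g₂, hg₂⟩⟩ := P.directed' δ₁ h₁ δ₂ h₂
    exact ⟨⟨δ.1, f ≫ δ.2⟩, ⟨δ, hδ, rfl⟩,
      ⟨g₁, by simp [hg₁]⟩, ⟨g₂, by simp [hg₂]⟩⟩
  saturated' := by
    rintro _ ⟨δ, hδ, rfl⟩ δ₂ ⟨h, hh⟩
    refine ⟨⟨δ₂.1, δ.2 ≫ h⟩, P.saturated' δ hδ _ ⟨h, rfl⟩, ?_⟩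
    obtain ⟨Y₂, g₂⟩ := δ₂
    have hg : g₂ = f ≫ (δ.2 ≫ h) := by simpa using hh.symm
    exact Sigma.ext rfl (heq_of_eq hg)

/-- A projectively filtered object of `D`. -/
structure PObj (D : Type u) [Category.{v} D] where
  base : D
  filt : ProjFilt base

/-- A morphism of projectively filtered objects: a morphism of the underlying
objects such that the pull back of the target filtration is contained in the
source filtration. -/
structure PHom (A B : PObj D) : Type v where
  toHom : A.base ⟶ B.base
  mem : ∀ δ ∈ B.filt.carrier, (⟨δ.1, toHom ≫ δ.2⟩ : MorFrom A.base) ∈ A.filt.carrier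

theorem PHom.ext' {A B : PObj D} {f g : PHom A B} (h : f.toHom = g.toHom) : f = g := by
  cases f; cases g; cases h; rfl

instance : Category.{v} (PObj D) where
  Hom := PHom
  id A := ⟨𝟙 A.base, fun δ hδ => by simp only [Category.id_comp]; exact hδ⟩
  comp {A B C} f g := ⟨f.toHom ≫ g.toHom, fun δ hδ => by
    have h1 := g.mem δ hδ
    have h2 := f.mem _ h1
    simpa using h2⟩
  id_comp f := PHom.ext' (Category.id_comp _)
  comp_id f := PHom.ext' (Category.comp_id _)
  assoc f g h := PHom.ext' (Category.assoc _ _ _)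

@[simp] theorem PObj.id_toHom (A : PObj D) : PHom.toHom (𝟙 A) = 𝟙 A.base := rfl
@[simp] theorem PObj.comp_toHom {A B C : PObj D} (f : A ⟶ B) (g : B ⟶ C) :
    PHom.toHom (f ≫ g) = PHom.toHom f ≫ PHom.toHom g := rfl

/-- The forgetful functor `PD → D`. -/
def Pforget (D : Type u) [Category.{v} D] : PObj D ⥤ D where
  obj A := A.base
  map f := PHom.toHom f

/-- The discrete filtration functor `D → PD`, `X ↦ (X, M(X))`. -/
def Pdiscrete (D : Type u) [Category.{v} D] : D ⥤ PObj D where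
  obj X :=
    { base := X
      filt :=
        { carrier := Set.univ
          nonempty' := ⟨⟨X, 𝟙 X⟩, trivial⟩
          directed' := fun δ₁ _ δ₂ _ =>
            ⟨⟨X, 𝟙 X⟩, trivial, ⟨δ₁.2, Category.id_comp _⟩, ⟨δ₂.2, Category.id_comp _⟩⟩
          saturated' := fun _ _ _ _ => trivial } }
  map f := ⟨f, fun _ _ => trivial⟩

/-- The functor `PD → PE` induced by a functor `G : D → E`. -/
def Pfunctor {E : Type u₂} [Category.{v₂} E] (G : D ⥤ E) : PObj D ⥤ PObj E where
  obj A :=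
    { base := G.obj A.base
      filt :=
        { carrier := {δ' | ∃ δ ∈ A.filt.carrier,
            Dom (⟨G.obj δ.1, G.map δ.2⟩ : MorFrom (G.obj A.base)) δ'}
          nonempty' := by
            obtain ⟨δ, hδ⟩ := A.filt.nonempty'
            exact ⟨⟨G.obj δ.1, G.map δ.2⟩, δ, hδ, ⟨𝟙 _, Category.comp_id _⟩⟩
          directed' := by
            rintro δ'₁ ⟨δ₁, h₁, g₁, hg₁⟩ δ'₂ ⟨δ₂, h₂, g₂, hg₂⟩
            obtain ⟨δ, hδ, ⟨k₁, hk₁⟩, ⟨k₂, hk₂⟩⟩ := A.filt.directed' δ₁ h₁ δ₂ h₂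
            refine ⟨⟨G.obj δ.1, G.map δ.2⟩, ⟨δ, hδ, ⟨𝟙 _, Category.comp_id _⟩⟩,
              ⟨G.map k₁ ≫ g₁, ?_⟩, ⟨G.map k₂ ≫ g₂, ?_⟩⟩
            · rw [← Category.assoc, ← G.map_comp, hk₁, hg₁]
            · rw [← Category.assoc, ← G.map_comp, hk₂, hg₂]
          saturated' := by
            rintro δ'₁ ⟨δ, hδ, g, hg⟩ δ'₂ ⟨h, hh⟩
            exact ⟨δ, hδ, ⟨g ≫ h, by rw [← Category.assoc, hg, hh]⟩⟩ } }
  map {A B} f :=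
    ⟨G.map (PHom.toHom f), by
      rintro δ' ⟨δ, hδ, g, hg⟩
      exact ⟨⟨δ.1, PHom.toHom f ≫ δ.2⟩, f.mem δ hδ,
        ⟨g, by rw [← hg, ← Category.assoc, ← G.map_comp]⟩⟩⟩
  map_id A := PHom.ext' (G.map_id _)
  map_comp f g := PHom.ext' (G.map_comp _ _)

/-- An extremal epimorphism: an epimorphism such that in any factorisation
through a monomorphism, the monomorphism is an isomorphism. -/
def ExtremalEpi {C : Type u₂} [Category.{v₂} C] {X Y : C} (e : X ⟶ Y) : Prop :=
  Epi e ∧ ∀ ⦃Z : C⦄ (g : X ⟶ Z) (m : Z ⟶ Y), Mono m → g ≫ m = e → IsIso m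

/-- An (extremal epi, mono) category: every morphism factors as an extremal
epimorphism followed by a monomorphism and such factorisations have the
diagonal fill-in property. -/
structure EMCat (C : Type u₂) [Category.{v₂} C] : Prop where
  fact : ∀ {X Y : C} (f : X ⟶ Y), ∃ (Z : C) (e : X ⟶ Z) (m : Z ⟶ Y),
    ExtremalEpi e ∧ Mono m ∧ e ≫ m = f
  diag : ∀ {A B Z X : C} (e : A ⟶ B) (m : Z ⟶ X) (g : A ⟶ Z) (h : B ⟶ X),
    ExtremalEpi e → Mono m → g ≫ m = e ≫ h → ∃ d : B ⟶ Z, e ≫ d = g ∧ d ≫ m = h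

/-- A projective filtration is reduced if it has an initial subclass of
extremal epimorphisms. -/
def ProjFilt.Reduced {X : D} (P : ProjFilt X) : Prop :=
  ∀ δ ∈ P.carrier, ∃ ε ∈ P.carrier, ExtremalEpi ε.2 ∧ Dom ε δ

/-- The category of reduced projectively filtered objects of `D`. -/
def QObj (D : Type u) [Category.{v} D] := ObjectProperty.FullSubcategory (fun A : PObj D => A.filt.Reduced)

instance : Category.{v} (QObj D) := ObjectProperty.FullSubcategory.category _

/-- The inclusion functor `QD → PD`. -/
def qpInclusion (D : Type u) [Category.{v} D] : QObj D ⥤ PObj D :=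
  ObjectProperty.ι _

/-- A category is extremally co-well-powered if every object has, up to
isomorphism, only a (small) set of extremal epimorphisms out of it. -/
def ECWP (C : Type u₂) [Category.{v₂} C] : Prop :=
  ∀ X : C, ∃ (ι : Type v₂) (Y : ι → C) (e : ∀ i, X ⟶ Y i),
    (∀ i, ExtremalEpi (e i)) ∧
    ∀ ⦃Z : C⦄ (f : X ⟶ Z), ExtremalEpi f → ∃ (i : ι) (φ : Y i ≅ Z), e i ≫ φ.hom = f

/-- The category `(P, D)` associated to a projective filtration: objects are the
elements of `P`, morphisms `δ₁ → δ₂` are morphisms `g` of `D` with `g ∘ δ₁ = δ₂`. -/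
def FiltCat {X : D} (P : ProjFilt X) : Type (max u v) := {δ : MorFrom X // δ ∈ P.carrier}

instance {X : D} (P : ProjFilt X) : Category.{v} (FiltCat P) where
  Hom δ₁ δ₂ := {g : δ₁.1.1 ⟶ δ₂.1.1 // δ₁.1.2 ≫ g = δ₂.1.2}
  id δ := ⟨𝟙 _, Category.comp_id _⟩
  comp f g := ⟨f.1 ≫ g.1, by rw [← Category.assoc, f.2, g.2]⟩
  id_comp f := Subtype.ext (Category.id_comp _)
  comp_id f := Subtype.ext (Category.comp_id _)
  assoc f g h := Subtype.ext (Category.assoc _ _ _)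

/-- The functor `(P, D) → D` sending an element of the filtration to its target. -/
def FiltDiagram {X : D} (P : ProjFilt X) : FiltCat P ⥤ D where
  obj δ := δ.1.1
  map g := g.1

/-- The canonical cone on the diagram of a projective filtration, with apex the
underlying object. -/
def filtCone {X : D} (P : ProjFilt X) : Limits.Cone (FiltDiagram P) where
  pt := X
  π :=
    { app := fun δ => δ.1.2
      naturality := fun δ₁ δ₂ g => by
        have := g.2
        dsimp [FiltDiagram] at *
        simp [this] }

/-- A reduced projective filtration is an iso-filtration if the canonical cone
on its diagram is a limit cone, i.e. the limit exists and the canonical morphism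
from the underlying object to it is an isomorphism. -/
def IsoFilt {X : D} (P : ProjFilt X) : Prop :=
  Nonempty (Limits.IsLimit (filtCone P))

/-- The category of iso-filtered objects of `D`. -/
def KObj (D : Type u) [Category.{v} D] :=
  ObjectProperty.FullSubcategory (fun A : QObj D => IsoFilt A.obj.filt)

instance : Category.{v} (KObj D) := ObjectProperty.FullSubcategory.category _

/-- The inclusion functor `KD → QD`. -/
def kqInclusion (D : Type u) [Category.{v} D] : KObj D ⥤ QObj D :=
  ObjectProperty.ι _

/-- The forgetful functor `KD → D`. -/
def Kforget (D : Type u) [Category.{v} D] : KObj D ⥤ D :=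
  kqInclusion D ⋙ qpInclusion D ⋙ Pforget D

/-- The smallest projective filtration containing a class of morphisms
(as a class). -/
def genSet {X : D} (S : Set (MorFrom X)) : Set (MorFrom X) :=
  {δ | ∀ P : ProjFilt X, S ⊆ P.carrier → δ ∈ P.carrier}

/-- The reduction of a class of morphisms: the saturation of the class of
extremal epimorphism parts of (extremal epi, mono)-factorisations of its
elements. -/
def redSet {X : D} (S : Set (MorFrom X)) : Set (MorFrom X) :=
  {δ | ∃ ε : MorFrom X, ExtremalEpi ε.2 ∧
    (∃ δ' ∈ S, ∃ m : ε.1 ⟶ δ'.1, Mono m ∧ ε.2 ≫ m = δ'.2) ∧ Dom ε δ}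

/-- The push forward of a filtration class along `f` (single morphism case). -/
def pushSet {X Y : D} (f : X ⟶ Y) (S : Set (MorFrom X)) : Set (MorFrom Y) :=
  {g | (⟨g.1, f ≫ g.2⟩ : MorFrom X) ∈ S}

/-- The discrete filtration on an object, as an iso-filtered object. -/
def kDiscreteObj (X : D) : KObj D where
  obj :=
    { obj := (Pdiscrete D).obj X
      property := fun δ _ => ⟨⟨X, 𝟙 X⟩, trivial,
        ⟨(inferInstance : Epi (𝟙 X)), fun _ g m hm hgm => by
          haveI : IsSplitEpi m := ⟨⟨⟨g, hgm⟩⟩⟩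
          exact isIso_of_mono_of_isSplitEpi m⟩,
        ⟨δ.2, Category.id_comp _⟩⟩ }
  property := ⟨{
    lift := fun c => c.π.app ⟨⟨X, 𝟙 X⟩, trivial⟩
    fac := fun c j => by
      have h := c.π.naturality (X := ⟨⟨X, 𝟙 X⟩, trivial⟩) (Y := j)
        ⟨j.1.2, Category.id_comp _⟩
      dsimp [FiltDiagram, filtCone] at h ⊢
      exact h.symm.trans (Category.id_comp _)
    uniq := fun c m hm => by
      have h := hm ⟨⟨X, 𝟙 X⟩, trivial⟩
      rw [← Category.comp_id m]
      exact h }⟩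

/-- The discrete filtration functor `D → KD`. -/
def kDiscrete (D : Type u) [Category.{v} D] : D ⥤ KObj D where
  obj X := kDiscreteObj X
  map f := ⟨f, fun _ _ => trivial⟩
  map_id _ := rfl
  map_comp _ _ := rfl

/-- The morphism in `KD` from an iso-filtered object to the discrete object on
the target of an element of its filtration. -/
def kToDiscrete {A : KObj D} (δ : MorFrom A.obj.obj.base)
    (hδ : δ ∈ A.obj.obj.filt.carrier) : A ⟶ kDiscreteObj δ.1 :=
  ⟨⟨show PHom A.obj.obj ((kDiscreteObj δ.1).obj.obj) from
    ⟨δ.2, fun γ _ => A.obj.obj.filt.saturated' δ hδ _ ⟨γ.2, rfl⟩⟩⟩⟩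

/-- The natural transformation `P(G) → P(H)` induced by `ν : G → H`. -/
def Pnat {E : Type u₂} [Category.{v₂} E] {G H : D ⥤ E} (ν : G ⟶ H) :
    Pfunctor G ⟶ Pfunctor H where
  app A :=
    ⟨ν.app A.base, by
      rintro δ' ⟨δ, hδ, g, hg⟩
      exact ⟨δ, hδ, ⟨ν.app δ.1 ≫ g, by
        rw [← Category.assoc, ν.naturality, Category.assoc, hg]; rfl⟩⟩⟩
  naturality {A B} f := PHom.ext' (ν.naturality (PHom.toHom f))


theorem Dom.trans {X : D} {δ₁ δ₂ δ₃ : MorFrom X} (h₁ : Dom δ₁ δ₂) (h₂ : Dom δ₂ δ₃) :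
    Dom δ₁ δ₃ := by
  obtain ⟨g, hg⟩ := h₁; obtain ⟨k, hk⟩ := h₂
  exact ⟨g ≫ k, by rw [← Category.assoc, hg, hk]⟩

/-- A general criterion for initiality of a full subcategory of `(P, D)`:
every element of `P` is dominated by an element of `T`, and elements of `T`
are epimorphisms. -/
theorem initial_of_dominating {X : D} (P : ProjFilt X) (T : FiltCat P → Prop)
    (hepi : ∀ δ : FiltCat P, T δ → Epi δ.1.2)
    (hdom : ∀ δ : FiltCat P, ∃ ε : FiltCat P, T ε ∧ Dom ε.1 δ.1) :
    (ObjectProperty.ι T).Initial := by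
  constructor
  intro δ
  obtain ⟨ε, hT, g, hg⟩ := hdom δ
  haveI : Nonempty (CostructuredArrow (ObjectProperty.ι T) δ) :=
    ⟨CostructuredArrow.mk
      ((⟨g, hg⟩ : (ObjectProperty.ι T).obj ⟨ε, hT⟩ ⟶ δ))⟩
  apply zigzag_isConnected
  intro a b
  -- `a.left.obj` and `b.left.obj` are elements of `P`; find a common dominator in `T`.
  obtain ⟨γ, hγ, hd1, hd2⟩ :=
    P.directed' a.left.obj.1 a.left.obj.2 b.left.obj.1 b.left.obj.2
  obtain ⟨ε', hT', hd⟩ := hdom ⟨γ, hγ⟩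
  obtain ⟨f₁, hf₁⟩ := hd.trans hd1
  obtain ⟨f₂, hf₂⟩ := hd.trans hd2
  haveI : Epi ε'.1.2 := hepi ε' hT'
  let u : ε' ⟶ a.left.obj := ⟨f₁, hf₁⟩
  let v : ε' ⟶ b.left.obj := ⟨f₂, hf₂⟩
  let k : CostructuredArrow (ObjectProperty.ι T) δ :=
    CostructuredArrow.mk (Y := ⟨ε', hT'⟩) (u ≫ a.hom)
  have huv : v ≫ b.hom = u ≫ a.hom := by
    apply Subtype.ext
    have h1 : ε'.1.2 ≫ (f₂ ≫ b.hom.1) = δ.1.2 := by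
      rw [← Category.assoc, hf₂]; exact b.hom.2
    have h2 : ε'.1.2 ≫ (f₁ ≫ a.hom.1) = δ.1.2 := by
      rw [← Category.assoc, hf₁]; exact a.hom.2
    exact (cancel_epi ε'.1.2).mp (h1.trans h2.symm)
  have z1 : Zag a k := Or.inr ⟨CostructuredArrow.homMk (ObjectProperty.homMk (X := k.left) (Y := a.left) u) (by simp [k])⟩
  have z2 : Zag k b := Or.inl ⟨CostructuredArrow.homMk (ObjectProperty.homMk (X := k.left) (Y := b.left) v) (by simp [k, huv])⟩
  exact Relation.ReflTransGen.tail (Relation.ReflTransGen.single z1) z2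

/-- in an extremally co-well-powered complete category every
reduced projectively filtered object has a limit; the extremal epimorphisms in
the filtration form an initial full subcategory of `(Q, D)`, and it may be
taken to be small. -/
theorem reduced_filtration_has_limit [Limits.HasLimits D] (hecwp : ECWP D) :
    ∀ (X : D) (P : ProjFilt X), P.Reduced →
      Limits.HasLimit (FiltDiagram P) ∧
      (ObjectProperty.ι (fun δ : FiltCat P => ExtremalEpi δ.1.2)).Initial ∧
      ∃ S : Set (FiltCat P), (∀ δ ∈ S, ExtremalEpi δ.1.2) ∧ Small.{v} S ∧
        (ObjectProperty.ι (fun δ : FiltCat P => δ ∈ S)).Initial := by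
  intro X P hP
  obtain ⟨ι, Y, e, hee, hcl⟩ := hecwp X
  -- the small set of representatives
  set S : Set (FiltCat P) := {δ | ∃ i, δ.1 = (⟨Y i, e i⟩ : MorFrom X)} with hSdef
  have hS_ee : ∀ δ ∈ S, ExtremalEpi δ.1.2 := by
    rintro δ ⟨i, hi⟩
    rw [hi]
    exact hee i
  have hSsmall : Small.{v} S := by
    refine small_of_injective (f := fun s => s.2.choose) ?_
    intro s₁ s₂ h
    have h₁ := s₁.2.choose_spec
    have h₂ := s₂.2.choose_spec
    dsimp only at h
    apply Subtype.ext; apply Subtype.ext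
    rw [h₁, h₂, h]
  have hdomS : ∀ δ : FiltCat P, ∃ ε : FiltCat P, ε ∈ S ∧ Dom ε.1 δ.1 := by
    intro δ
    obtain ⟨ε, hε, hee', hd⟩ := hP δ.1 δ.2
    obtain ⟨i, φ, hφ⟩ := hcl ε.2 hee'
    have hdom1 : Dom ε (⟨Y i, e i⟩ : MorFrom X) :=
      ⟨φ.inv, by rw [← hφ]; simp⟩
    have hmem : (⟨Y i, e i⟩ : MorFrom X) ∈ P.carrier := P.saturated' ε hε _ hdom1
    have hdom2 : Dom (⟨Y i, e i⟩ : MorFrom X) ε := ⟨φ.hom, hφ⟩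
    exact ⟨⟨⟨Y i, e i⟩, hmem⟩, ⟨i, rfl⟩, hdom2.trans hd⟩
  have initS : (ObjectProperty.ι (fun δ : FiltCat P => δ ∈ S)).Initial :=
    initial_of_dominating P _ (fun δ h => (hS_ee δ h).1) hdomS
  have initE : (ObjectProperty.ι (fun δ : FiltCat P => ExtremalEpi δ.1.2)).Initial :=
    initial_of_dominating P _ (fun _ h => h.1) (fun δ => by
      obtain ⟨ε, hε, hee', hd⟩ := hP δ.1 δ.2
      exact ⟨⟨ε, hε⟩, hee', hd⟩)
  refine ⟨?_, initE, S, hS_ee, hSsmall, initS⟩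
  haveI := hSsmall
  haveI : Small.{v} (ObjectProperty.FullSubcategory (fun δ : FiltCat P => δ ∈ S)) :=
    small_of_injective (f := fun x => (⟨x.1, x.2⟩ : S)) (by
      intro a b hab
      cases a; cases b
      simpa using hab)
  haveI : EssentiallySmall.{v} (ObjectProperty.FullSubcategory (fun δ : FiltCat P => δ ∈ S)) :=
    essentiallySmall_of_small_of_locallySmall _
  haveI : HasLimitsOfShape (ObjectProperty.FullSubcategory (fun δ : FiltCat P => δ ∈ S)) D :=
    hasLimitsOfShape_of_essentiallySmall _ _
  haveI := initS
  exact Functor.Initial.hasLimit_of_comp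
    (ObjectProperty.ι (fun δ : FiltCat P => δ ∈ S))

end FilteredCats
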